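/- Let X be a compact metric space, T : X → X continuous, and suppose φ ∈ Lip(X) is maximized by a periodic orbit O (i.e., the averaged Dirac measure μ on O satisfies ∫ φ dμ = β(φ)). Then for every ε > 0 there exists δ > 0 such that for every Lipschitz ψ with lip(ψ) ≤ δ, the function φ - ε·dist(·, O) + ψ is uniquely maximized by O: for every T-invariant Borel probability measure ν ≠ μ, ∫ (φ - ε·dist(·,O) + ψ) dν < ∫ (φ - ε·dist(·,O) + ψ) dμ. -/

import Mathlib

open MeasureTheory Metric

set_option linter.unusedSectionVars false
set_option maxHeartbeats 1000000

noncomputable def beta {X : Type*} [TopologicalSpace X] [MeasurableSpace X]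
    (T : X → X) (φ : X → ℝ) : ℝ :=
  sSup ((fun μ : Measure X => ∫ x, φ x ∂μ) ''
    {μ : Measure X | IsProbabilityMeasure μ ∧ μ.map T = μ})

noncomputable def orbMeas {X : Type*} [MeasurableSpace X] (T : X → X) (y : X) (p : ℕ) :
    Measure X :=
  (p : ENNReal)⁻¹ • ∑ k ∈ Finset.range p, Measure.dirac (T^[k] y)

section Aux

open Finset Function Classical

lemma periodic_shift' {M : Type*} (f : ℕ → M) (q : ℕ) (hf : ∀ k, f (k + q) = f k) :
    ∀ n i, f (n * q + i) = f i := by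
  intro n
  induction n with
  | zero => simp
  | succ k ihk => intro i; rw [show (k+1)*q + i = (k*q + i) + q by ring, hf, ihk]

lemma sum_group' {M : Type*} [AddCommMonoid M] (f : ℕ → M) (q m : ℕ)
    (hf : ∀ k, f (k + q) = f k) :
    ∑ k ∈ range (m * q), f k = m • ∑ i ∈ range q, f i := by
  induction m with
  | zero => simp
  | succ n ih =>
    rw [show (n+1) * q = n*q + q by ring, Finset.sum_range_add, ih, succ_nsmul]
    congr 1
    exact Finset.sum_congr rfl fun i _ => periodic_shift' f q hf n i

variable {X : Type*} [MetricSpace X] [CompactSpace X] [MeasurableSpace X] [BorelSpace X]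

omit [MetricSpace X] [CompactSpace X] [BorelSpace X] in
lemma orbMeas_prob (T : X → X) (y : X) (p : ℕ) (hp : 0 < p) :
    IsProbabilityMeasure (orbMeas T y p) := by
  constructor
  simp [orbMeas, Measure.smul_apply, Measure.finset_sum_apply, smul_eq_mul]
  rw [ENNReal.inv_mul_cancel] <;> simp [hp.ne']

omit [MetricSpace X] [CompactSpace X] [BorelSpace X] in
lemma orbMeas_min (T : X → X) (y : X) (p : ℕ) (hp : 0 < p) (hper : T^[p] y = y) :
    orbMeas T y p = orbMeas T y (minimalPeriod T y) := by
  set q := minimalPeriod T y with hq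
  have hyp : IsPeriodicPt T p y := hper
  have hdvd : q ∣ p := hyp.minimalPeriod_dvd
  have hq0 : 0 < q := hyp.minimalPeriod_pos hp
  obtain ⟨m, hm⟩ := hdvd
  have hm0 : m ≠ 0 := by rintro rfl; rw [hm] at hp; simp at hp
  have hper_q : T^[q] y = y := isPeriodicPt_minimalPeriod T y
  have hshift : ∀ k, (Measure.dirac (T^[k+q] y) : Measure X) = Measure.dirac (T^[k] y) := by
    intro k; rw [iterate_add_apply, hper_q]
  have hsum : ∑ k ∈ range p, Measure.dirac (T^[k] y)
      = m • ∑ i ∈ range q, Measure.dirac (T^[i] y) := by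
    rw [hm, mul_comm]; exact sum_group' _ q m hshift
  rw [orbMeas, orbMeas, hsum, ← Nat.cast_smul_eq_nsmul ENNReal, smul_smul]
  congr 1
  rw [hm]
  push_cast
  rw [ENNReal.mul_inv (Or.inl (by exact_mod_cast hq0.ne')) (Or.inl (ENNReal.natCast_ne_top q)),
    mul_assoc, ENNReal.inv_mul_cancel (by exact_mod_cast hm0) (ENNReal.natCast_ne_top m), mul_one]

lemma cont_integrable {f : X → ℝ} (hf : Continuous f) (ν : Measure X) [IsFiniteMeasure ν] :
    Integrable f ν :=
  hf.integrable_of_hasCompactSupport (isClosed_tsupport f).isCompact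

lemma integral_orbMeas (T : X → X) (y : X) (p : ℕ) {f : X → ℝ} (hf : Continuous f) :
    ∫ x, f x ∂(orbMeas T y p) = (p : ℝ)⁻¹ * ∑ k ∈ range p, f (T^[k] y) := by
  rw [orbMeas, integral_smul_measure, integral_finset_sum_measure]
  · simp [integral_dirac, ENNReal.toReal_inv, smul_eq_mul]
  · intro k _
    exact ⟨hf.aestronglyMeasurable, by simp [HasFiniteIntegral, lintegral_dirac]⟩

lemma le_infDist' {s : Set X} (hs : s.Nonempty) {x : X} {b : ℝ}
    (h : ∀ y ∈ s, b ≤ dist x y) : b ≤ infDist x s := by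
  by_contra hlt
  push_neg at hlt
  obtain ⟨y, hy, hxy⟩ := (infDist_lt_iff hs).1 hlt
  exact absurd hxy (not_lt.2 (h y hy))

lemma eq_orb (T : X → X) (hT : Continuous T) (y₀ : X) (hq0 : 0 < minimalPeriod T y₀)
    (O : Set X) (hOq : O = (fun i => T^[i] y₀) '' Set.Iio (minimalPeriod T y₀))
    (ν : Measure X) (hν : IsProbabilityMeasure ν) (hinv : ν.map T = ν)
    (hm : ∫ z, infDist z O ∂ν = 0) :
    ν = orbMeas T y₀ (minimalPeriod T y₀) := by
  set q := minimalPeriod T y₀ with hq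
  set x : ℕ → X := fun i => T^[i] y₀ with hx
  have hinj : Set.InjOn x (Set.Iio q) := iterate_injOn_Iio_minimalPeriod
  have hxsucc : ∀ i, T (x i) = x ((i + 1) % q) := by
    intro i
    have h1 : T (x i) = x (i + 1) := (iterate_succ_apply' T i y₀).symm
    have h2 : x ((i + 1) % q) = x (i + 1) := iterate_mod_minimalPeriod_eq
    rw [h1, h2]
  have hOne : O.Nonempty := ⟨x 0, by rw [hOq]; exact ⟨0, hq0, rfl⟩⟩
  have hOfin : O.Finite := by rw [hOq]; exact (Set.finite_Iio q).image _
  have hOclosed : IsClosed O := hOfin.isClosed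
  -- ν is supported on O
  have hd_int : Integrable (fun z => infDist z O) ν :=
    cont_integrable (continuous_infDist_pt O) ν
  have hae : ∀ᵐ z ∂ν, infDist z O = 0 :=
    (integral_eq_zero_iff_of_nonneg (fun z => infDist_nonneg) hd_int).1 hm
  have hcompl : ν Oᶜ = 0 := by
    refine measure_mono_null ?_ (ae_iff.1 hae)
    intro z hz h0
    exact hz ((hOclosed.mem_iff_infDist_zero hOne).2 h0)
  -- singleton masses are all equal
  have hstep : ∀ i, ν {x i} ≤ ν {x ((i + 1) % q)} := by
    intro i
    have heqm : ν {x ((i+1) % q)} = ν (T ⁻¹' {x ((i+1) % q)}) := by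
      conv_lhs => rw [← hinv]
      exact Measure.map_apply hT.measurable (measurableSet_singleton _)
    rw [heqm]
    apply measure_mono
    intro z hz
    simp only [Set.mem_singleton_iff] at hz
    subst hz
    simp [Set.mem_preimage, hxsucc i]
  have hup : ∀ i, i < q → ν {x 0} ≤ ν {x i} := by
    intro i
    induction i with
    | zero => intro _; exact le_rfl
    | succ n ih =>
      intro hn
      have h1 : ν {x 0} ≤ ν {x n} := ih (by omega)
      have h2 := hstep n
      rw [Nat.mod_eq_of_lt hn] at h2
      exact h1.trans h2
  have hdown : ∀ d i, i < q → q = i + d → ν {x i} ≤ ν {x 0} := by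
    intro d
    induction d with
    | zero => intro i hi hq'; omega
    | succ n ih =>
      intro i hi hq'
      rcases Nat.eq_or_lt_of_le (Nat.succ_le_of_lt hi) with h | h
      · -- i + 1 = q
        have h2 := hstep i
        rw [show (i + 1) % q = 0 by rw [show i + 1 = q from h]; exact Nat.mod_self q] at h2
        exact h2
      · have h2 := hstep i
        rw [Nat.mod_eq_of_lt h] at h2
        exact h2.trans (ih (i+1) h (by omega))
  have heqb : ∀ i, i < q → ν {x i} = ν {x 0} := fun i hi =>
    le_antisymm (hdown (q - i) i hi (by omega)) (hup i hi)
  -- total mass on O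
  have hO1 : ν O = 1 := by
    have h := measure_add_measure_compl (μ := ν) hOclosed.measurableSet
    rw [hcompl, add_zero] at h
    rw [h]; exact measure_univ
  have hOun : O = ⋃ i ∈ Finset.range q, ({x i} : Set X) := by
    rw [hOq]; ext z
    simp only [Set.mem_image, Set.mem_Iio, Set.mem_iUnion, Finset.mem_range,
      Set.mem_singleton_iff]
    constructor
    · rintro ⟨i, hi, rfl⟩; exact ⟨i, hi, rfl⟩
    · rintro ⟨i, hi, rfl⟩; exact ⟨i, hi, rfl⟩
  have hdisj : (↑(Finset.range q) : Set ℕ).PairwiseDisjoint (fun i => ({x i} : Set X)) := by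
    intro i hi j hj hij
    simp only [Finset.coe_range, Set.mem_Iio] at hi hj
    simp only [Set.disjoint_singleton]
    exact fun h => hij (hinj hi hj h)
  have hsum : ∑ i ∈ Finset.range q, ν {x i} = 1 := by
    rw [← measure_biUnion_finset hdisj (fun i _ => measurableSet_singleton _), ← hOun, hO1]
  have hb : ν {x 0} = (q : ENNReal)⁻¹ := by
    have hsum' : (q : ENNReal) * ν {x 0} = 1 := by
      rw [← hsum, Finset.sum_congr rfl (fun i hi => heqb i (Finset.mem_range.1 hi)),
        Finset.sum_const, Finset.card_range, nsmul_eq_mul]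
    calc ν {x 0} = (q : ENNReal)⁻¹ * ((q : ENNReal) * ν {x 0}) := by
          rw [← mul_assoc, ENNReal.inv_mul_cancel (by exact_mod_cast hq0.ne')
            (ENNReal.natCast_ne_top q), one_mul]
      _ = (q : ENNReal)⁻¹ := by rw [hsum', mul_one]
  have hbi : ∀ i, i < q → ν {x i} = (q : ENNReal)⁻¹ := fun i hi => (heqb i hi).trans hb
  -- conclude
  ext s hs
  have h1 : ν s = ν (s ∩ O) := by
    refine le_antisymm ?_ (measure_mono Set.inter_subset_left)
    calc ν s = ν ((s ∩ O) ∪ (s \ O)) := by rw [Set.inter_union_diff]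
      _ ≤ ν (s ∩ O) + ν (s \ O) := measure_union_le _ _
      _ ≤ ν (s ∩ O) + 0 := by
          gcongr
          exact le_of_eq (measure_mono_null (Set.diff_subset_compl s O) hcompl)
      _ = ν (s ∩ O) := add_zero _
  have h2 : s ∩ O = ⋃ i ∈ Finset.filter (fun i => x i ∈ s) (Finset.range q), ({x i} : Set X) := by
    ext z
    simp only [Set.mem_inter_iff, hOq, Set.mem_image, Set.mem_Iio, Set.mem_iUnion,
      Finset.mem_filter, Finset.mem_range, Set.mem_singleton_iff]
    constructor
    · rintro ⟨hzs, i, hi, rfl⟩; exact ⟨i, ⟨hi, hzs⟩, rfl⟩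
    · rintro ⟨i, ⟨hi, his⟩, rfl⟩; exact ⟨his, i, hi, rfl⟩
  have h3 : ν (s ∩ O) =
      ((Finset.range q).filter (fun i => x i ∈ s)).card * (q : ENNReal)⁻¹ := by
    rw [h2, measure_biUnion_finset
      (hdisj.subset (Finset.coe_subset.2 (Finset.filter_subset _ _)))
      (fun i _ => measurableSet_singleton _),
      Finset.sum_congr rfl
        (fun i hi => hbi i (Finset.mem_range.1 (Finset.mem_filter.1 hi).1)),
      Finset.sum_const, nsmul_eq_mul]
  rw [h1, h3, orbMeas]
  simp only [Measure.smul_apply, Measure.coe_finset_sum, Finset.sum_apply, smul_eq_mul]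
  have hdir : ∀ i ∈ Finset.range q, (Measure.dirac (T^[i] y₀) : Measure X) s
      = if x i ∈ s then (1 : ENNReal) else 0 := by
    intro i _
    rw [Measure.dirac_apply' _ hs]
    simp [Set.indicator_apply, hx]
  rw [Finset.sum_congr rfl hdir, ← Finset.sum_filter, Finset.sum_const, nsmul_eq_mul, mul_one,
    mul_comm]

lemma shadow (T : X → X) (hT : Continuous T)
    (x : ℕ → X) (q : ℕ) (hq0 : 0 < q)
    (O : Set X) (hOq : O = x '' Set.Iio q)
    (s r D : ℝ) (hs0 : 0 < s)
    (hsep : ∀ i < q, ∀ j < q, i ≠ j → s ≤ dist (x i) (x j))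
    (hr0 : 0 < r) (hrs : r ≤ s / 3)
    (hmap : ∀ i < q, ∀ z, dist z (x i) < r → dist (T z) (x ((i + 1) % q)) < s / 3)
    (hD : ∀ a b : X, dist a b ≤ D)
    (ν : Measure X) (hν : IsProbabilityMeasure ν) (hinv : ν.map T = ν)
    (ψ : X → ℝ) (Kψ : NNReal) (hψ : LipschitzWith Kψ ψ) :
    ∫ z, ψ z ∂ν ≤ (q : ℝ)⁻¹ * ∑ i ∈ range q, ψ (x i)
      + (1 + D / r + 3 * q ^ 2 * D / r) * Kψ * ∫ z, infDist z O ∂ν := by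
  have hψc : Continuous ψ := hψ.continuous
  have hdc : Continuous (fun z => infDist z O) := continuous_infDist_pt O
  have hint : Integrable ψ ν := cont_integrable hψc ν
  have hd_int : Integrable (fun z => infDist z O) ν := cont_integrable hdc ν
  set m := ∫ z, infDist z O ∂ν with hm
  have hm0 : 0 ≤ m := integral_nonneg fun z => infDist_nonneg
  have hD0 : 0 ≤ D := le_trans dist_nonneg (hD (x 0) (x 0))
  have hOne : O.Nonempty := ⟨x 0, by rw [hOq]; exact ⟨0, hq0, rfl⟩⟩
  have hmem : ∀ i < q, x i ∈ O := fun i hi => by rw [hOq]; exact ⟨i, hi, rfl⟩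
  set B : ℕ → Set X := fun i => ball (x i) r with hB
  set U : Set X := ⋃ i ∈ range q, B i with hU
  have hUmeas : MeasurableSet U := (range q).measurableSet_biUnion fun i _ => measurableSet_ball
  -- dist to orbit within a ball
  have hball_dist : ∀ i < q, ∀ z ∈ B i, dist z (x i) ≤ infDist z O := by
    intro i hi z hz
    refine le_infDist' hOne fun y hy => ?_
    rw [hOq] at hy
    obtain ⟨j, hj, rfl⟩ := hy
    rcases eq_or_ne j i with rfl | hij
    · exact le_rfl
    · have h1 : s ≤ dist (x i) (x j) := hsep i hi j hj (Ne.symm hij)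
      have h2 : dist z (x i) < r := mem_ball.1 hz
      have h3 : dist (x i) (x j) ≤ dist (x i) z + dist z (x j) := dist_triangle _ _ _
      rw [dist_comm (x i) z] at h3
      linarith
  -- points outside U are far from O
  have hfarU : ∀ z ∈ Uᶜ, r ≤ infDist z O := by
    intro z hz
    refine le_infDist' hOne fun y hy => ?_
    rw [hOq] at hy
    obtain ⟨j, hj, rfl⟩ := hy
    by_contra hlt
    exact hz (Set.mem_biUnion (mem_range.2 hj) (mem_ball.2 (by linarith)))
  -- annulus points are far from O
  have hfarAnn : ∀ j < q, ∀ z ∈ ball (x j) (s/3) \ B j, r ≤ infDist z O := by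
    intro j hj z hz
    obtain ⟨hz1, hz2⟩ := hz
    refine le_infDist' hOne fun y hy => ?_
    rw [hOq] at hy
    obtain ⟨l, hl, rfl⟩ := hy
    rcases eq_or_ne l j with rfl | hlj
    · exact not_lt.1 fun h => hz2 (mem_ball.2 h)
    · have h1 : s ≤ dist (x j) (x l) := hsep j hj l hl (Ne.symm hlj)
      have h2 : dist z (x j) < s/3 := mem_ball.1 hz1
      have h3 : dist (x j) (x l) ≤ dist (x j) z + dist z (x l) := dist_triangle _ _ _
      rw [dist_comm (x j) z] at h3
      linarith
  -- Markov-type bound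
  have hmark : ∀ A : Set X, MeasurableSet A → (∀ z ∈ A, r ≤ infDist z O) →
      (ν A).toReal ≤ m / r := by
    intro A hA hAr
    have h1 : r * (ν A).toReal ≤ ∫ z in A, infDist z O ∂ν :=
      setIntegral_ge_of_const_le_real hA (measure_ne_top ν A) hAr hd_int.integrableOn
    have h2 : ∫ z in A, infDist z O ∂ν ≤ m :=
      setIntegral_le_integral hd_int (ae_of_all ν fun z => infDist_nonneg)
    rw [le_div_iff₀ hr0, mul_comm]
    linarith
  -- disjointness of balls
  have hdisj : (↑(range q) : Set ℕ).Pairwise (Disjoint on B) := by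
    intro i hi j hj hij
    simp only [Finset.coe_range, Set.mem_Iio] at hi hj
    exact ball_disjoint_ball (by linarith [hsep i hi j hj hij])
  -- decomposition of the integral
  have hsplit : ∫ z, ψ z ∂ν = ∑ i ∈ range q, ∫ z in B i, ψ z ∂ν + ∫ z in Uᶜ, ψ z ∂ν := by
    rw [← integral_add_compl hUmeas hint, hU,
      integral_biUnion_finset (range q) (fun i _ => measurableSet_ball) hdisj
        (fun i _ => hint.integrableOn)]
  -- per-ball estimate
  have hballint : ∀ i ∈ range q, ∫ z in B i, ψ z ∂ν ≤
      (ν (B i)).toReal * ψ (x i) + Kψ * ∫ z in B i, infDist z O ∂ν := by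
    intro i hi
    have hi' := mem_range.1 hi
    have h1 : ∫ z in B i, ψ z ∂ν ≤ ∫ z in B i, (ψ (x i) + Kψ * infDist z O) ∂ν := by
      refine setIntegral_mono_on hint.integrableOn
        ((integrable_const _).add (hd_int.const_mul _)).integrableOn measurableSet_ball
        fun z hz => ?_
      have h2 : ψ z - ψ (x i) ≤ Kψ * dist z (x i) := by
        have := hψ.dist_le_mul z (x i)
        rw [Real.dist_eq] at this
        linarith [le_abs_self (ψ z - ψ (x i))]
      have h3 := hball_dist i hi' z hz
      nlinarith [NNReal.coe_nonneg Kψ, (dist_nonneg : (0:ℝ) ≤ dist z (x i))]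
    rw [integral_add (integrable_const _)
      ((hd_int.const_mul _).integrableOn) , setIntegral_const, smul_eq_mul,
      integral_const_mul] at h1
    exact h1
  -- sum of infDist integrals over balls
  have hsumDist : ∑ i ∈ range q, ∫ z in B i, infDist z O ∂ν ≤ m := by
    rw [← integral_biUnion_finset (range q) (fun i _ => measurableSet_ball) hdisj
      (fun i _ => hd_int.integrableOn)]
    exact setIntegral_le_integral hd_int (ae_of_all ν fun z => infDist_nonneg)
  -- outside part
  have houtside : ∫ z in Uᶜ, ψ z ∂ν ≤ (ν Uᶜ).toReal * (ψ (x 0) + Kψ * D) := by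
    have h1 : ∫ z in Uᶜ, ψ z ∂ν ≤ ∫ z in Uᶜ, (ψ (x 0) + Kψ * D) ∂ν := by
      refine setIntegral_mono_on hint.integrableOn (integrable_const _).integrableOn
        hUmeas.compl fun z _ => ?_
      have h2 : ψ z - ψ (x 0) ≤ Kψ * dist z (x 0) := by
        have := hψ.dist_le_mul z (x 0)
        rw [Real.dist_eq] at this
        linarith [le_abs_self (ψ z - ψ (x 0))]
      nlinarith [NNReal.coe_nonneg Kψ, (dist_nonneg : (0:ℝ) ≤ dist z (x 0)), hD z (x 0)]
    rwa [setIntegral_const, smul_eq_mul] at h1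
  -- masses
  set a : ℕ → ℝ := fun i => (ν (B i)).toReal with haB
  have ha0 : ∀ i, 0 ≤ a i := fun i => ENNReal.toReal_nonneg
  have hmr0 : 0 ≤ m / r := div_nonneg hm0 hr0.le
  -- mass chain via invariance
  have hstep : ∀ i < q, a i ≤ a ((i + 1) % q) + m / r := by
    intro i hi
    set j := (i + 1) % q with hj
    have hjq : j < q := Nat.mod_lt _ hq0
    have hsub : B i ⊆ T ⁻¹' (ball (x j) (s/3)) := by
      intro z hz
      exact mem_ball.2 (hmap i hi z (mem_ball.1 hz))
    have h1 : ν (B i) ≤ ν (ball (x j) (s/3)) := by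
      calc ν (B i) ≤ ν (T ⁻¹' (ball (x j) (s/3))) := measure_mono hsub
        _ = (ν.map T) (ball (x j) (s/3)) :=
            (Measure.map_apply hT.measurable measurableSet_ball).symm
        _ = ν (ball (x j) (s/3)) := by rw [hinv]
    have h2 : ν (ball (x j) (s/3)) ≤ ν (B j) + ν (ball (x j) (s/3) \ B j) := by
      conv_lhs => rw [← Set.union_diff_cancel (ball_subset_ball (by linarith : r ≤ s/3))]
      exact measure_union_le _ _
    have h3 : (ν (ball (x j) (s/3) \ B j)).toReal ≤ m / r :=
      hmark _ (measurableSet_ball.diff measurableSet_ball) (hfarAnn j hjq)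
    have h4 : (ν (B i)).toReal ≤ (ν (B j)).toReal + (ν (ball (x j) (s/3) \ B j)).toReal := by
      rw [← ENNReal.toReal_add (measure_ne_top _ _) (measure_ne_top _ _)]
      exact ENNReal.toReal_mono (by finiteness) (h1.trans h2)
    simpa [haB] using h4.trans (by linarith)
  -- iterate the chain
  have hchain : ∀ n, ∀ i < q, a i ≤ a ((i + n) % q) + n * (m / r) := by
    intro n
    induction n with
    | zero => intro i hi; simp [Nat.mod_eq_of_lt hi]
    | succ n ih =>
      intro i hi
      have h1 := ih i hi
      have h2 := hstep ((i + n) % q) (Nat.mod_lt _ hq0)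
      rw [Nat.mod_add_mod] at h2
      have : ((i + n) + 1) = i + (n + 1) := by omega
      rw [this] at h2
      push_cast
      linarith
  have hpair : ∀ i < q, ∀ j < q, a i ≤ a j + (2 * q) * (m / r) := by
    intro i hi j hj
    have h1 := hchain (j + q - i) i hi
    have h2 : (i + (j + q - i)) % q = j := by
      rw [show i + (j + q - i) = j + q by omega, Nat.add_mod_right, Nat.mod_eq_of_lt hj]
    rw [h2] at h1
    have h3 : ((j + q - i : ℕ) : ℝ) ≤ 2 * q := by
      have : j + q - i ≤ 2 * q := by omega
      exact_mod_cast this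
    nlinarith
  -- total mass
  have hUsum : (ν U).toReal = ∑ i ∈ range q, a i := by
    rw [hU, measure_biUnion_finset hdisj fun i _ => measurableSet_ball,
      ENNReal.toReal_sum fun i _ => measure_ne_top _ _]
  have hUcompl : (ν U).toReal + (ν Uᶜ).toReal = 1 := by
    rw [← ENNReal.toReal_add (measure_ne_top _ _) (measure_ne_top _ _),
      measure_add_measure_compl hUmeas]
    simp
  have hUc_le : (ν Uᶜ).toReal ≤ m / r := hmark _ hUmeas.compl hfarU
  have hUc2 : ∑ i ∈ range q, a i + (ν Uᶜ).toReal = 1 := by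
    rw [← hUsum]; exact hUcompl
  have hUc0 : 0 ≤ (ν Uᶜ).toReal := ENNReal.toReal_nonneg
  have hsuma_le : ∑ i ∈ range q, a i ≤ 1 := by linarith
  have hsuma_ge : (1 : ℝ) - m / r ≤ ∑ i ∈ range q, a i := by linarith
  -- individual masses close to 1/q
  have hq0R : (0 : ℝ) < q := by exact_mod_cast hq0
  have hq1R : (1 : ℝ) ≤ q := by exact_mod_cast hq0
  have hqinv : (q : ℝ)⁻¹ ≤ q := le_trans (by rw [inv_le_one_iff₀]; right; exact hq1R) hq1R
  have habs : ∀ i < q, |a i - (q : ℝ)⁻¹| ≤ 3 * q * (m / r) := by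
    intro i hi
    have hup : a i ≤ (q : ℝ)⁻¹ + 2 * q * (m / r) := by
      have hqa : (q : ℝ) * a i ≤ 1 + q * (2 * q * (m / r)) := by
        have h1 : ∑ j ∈ range q, a i ≤ ∑ j ∈ range q, (a j + (2 * q) * (m / r)) :=
          Finset.sum_le_sum fun j hj => hpair i hi j (mem_range.1 hj)
        rw [Finset.sum_const, Finset.card_range, nsmul_eq_mul, Finset.sum_add_distrib,
          Finset.sum_const, Finset.card_range, nsmul_eq_mul] at h1
        linarith
      have h2 := mul_le_mul_of_nonneg_left hqa (inv_nonneg.2 hq0R.le)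
      rw [← mul_assoc, inv_mul_cancel₀ hq0R.ne', one_mul] at h2
      calc a i ≤ (q : ℝ)⁻¹ * (1 + q * (2 * q * (m / r))) := h2
        _ = (q : ℝ)⁻¹ + 2 * q * (m / r) := by field_simp
    have hlow : (q : ℝ)⁻¹ - 3 * q * (m / r) ≤ a i := by
      have hqa : 1 - m / r ≤ (q : ℝ) * a i + q * (2 * q * (m / r)) := by
        have h1 : ∑ j ∈ range q, a j ≤ ∑ j ∈ range q, (a i + (2 * q) * (m / r)) :=
          Finset.sum_le_sum fun j hj => hpair j (mem_range.1 hj) i hi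
        rw [Finset.sum_add_distrib, Finset.sum_const, Finset.card_range, nsmul_eq_mul,
          Finset.sum_const, Finset.card_range, nsmul_eq_mul] at h1
        linarith
      have h2 := mul_le_mul_of_nonneg_left hqa (inv_nonneg.2 hq0R.le)
      rw [mul_add, ← mul_assoc, ← mul_assoc, inv_mul_cancel₀ hq0R.ne', one_mul, one_mul] at h2
      have h3 : (q : ℝ)⁻¹ * (1 - m / r) = (q : ℝ)⁻¹ - (q : ℝ)⁻¹ * (m / r) := by ring
      rw [h3] at h2
      have h4 : (q : ℝ)⁻¹ * (m / r) ≤ q * (m / r) := mul_le_mul_of_nonneg_right hqinv hmr0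
      nlinarith
    rw [abs_le]
    constructor <;> nlinarith
  -- bound ψ values
  have hc : ∀ i < q, |ψ (x i) - ψ (x 0)| ≤ Kψ * D := by
    intro i hi
    have h1 := hψ.dist_le_mul (x i) (x 0)
    rw [Real.dist_eq] at h1
    exact h1.trans (by nlinarith [NNReal.coe_nonneg Kψ, hD (x i) (x 0),
      (dist_nonneg : (0:ℝ) ≤ dist (x i) (x 0))])
  -- central sum estimate
  have key : ∀ i ∈ range q, a i * ψ (x i) ≤
      a i * ψ (x 0) + (q : ℝ)⁻¹ * (ψ (x i) - ψ (x 0)) + 3 * q * (m / r) * (Kψ * D) := by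
    intro i hi
    have hi' := mem_range.1 hi
    have h1 : (a i - (q : ℝ)⁻¹) * (ψ (x i) - ψ (x 0)) ≤ 3 * q * (m / r) * (Kψ * D) := by
      calc (a i - (q : ℝ)⁻¹) * (ψ (x i) - ψ (x 0))
          ≤ |(a i - (q : ℝ)⁻¹) * (ψ (x i) - ψ (x 0))| := le_abs_self _
        _ = |a i - (q : ℝ)⁻¹| * |ψ (x i) - ψ (x 0)| := abs_mul _ _
        _ ≤ (3 * q * (m / r)) * (Kψ * D) := by
            apply mul_le_mul (habs i hi') (hc i hi') (abs_nonneg _)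
            positivity
    nlinarith
  have hkeysum : ∑ i ∈ range q, a i * ψ (x i) ≤
      (∑ i ∈ range q, a i) * ψ (x 0) + (q : ℝ)⁻¹ * (∑ i ∈ range q, ψ (x i)) - ψ (x 0)
        + q * (3 * q * (m / r) * (Kψ * D)) := by
    have h1 := Finset.sum_le_sum key
    rw [Finset.sum_add_distrib, Finset.sum_add_distrib, ← Finset.sum_mul,
      Finset.sum_const, Finset.card_range, nsmul_eq_mul] at h1
    have h2 : ∑ i ∈ range q, (q : ℝ)⁻¹ * (ψ (x i) - ψ (x 0))
        = (q : ℝ)⁻¹ * (∑ i ∈ range q, ψ (x i)) - ψ (x 0) := by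
      rw [← Finset.mul_sum, Finset.sum_sub_distrib, Finset.sum_const, Finset.card_range,
        nsmul_eq_mul, mul_sub, ← mul_assoc, inv_mul_cancel₀ hq0R.ne', one_mul]
    rw [h2] at h1
    linarith
  -- assembling everything
  have hKD0 : (0 : ℝ) ≤ (Kψ : ℝ) * D := mul_nonneg (NNReal.coe_nonneg Kψ) hD0
  have hA1 : ∫ z, ψ z ∂ν ≤ ∑ i ∈ range q, a i * ψ (x i)
      + Kψ * (∑ i ∈ range q, ∫ z in B i, infDist z O ∂ν)
      + (ν Uᶜ).toReal * (ψ (x 0) + Kψ * D) := by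
    rw [hsplit]
    have h1 := Finset.sum_le_sum hballint
    rw [Finset.sum_add_distrib, ← Finset.mul_sum] at h1
    linarith [houtside]
  have hA2 : (Kψ : ℝ) * (∑ i ∈ range q, ∫ z in B i, infDist z O ∂ν) ≤ Kψ * m :=
    mul_le_mul_of_nonneg_left hsumDist (NNReal.coe_nonneg Kψ)
  have hA3 : (ν Uᶜ).toReal * (ψ (x 0) + Kψ * D)
      = (ν Uᶜ).toReal * ψ (x 0) + (ν Uᶜ).toReal * (Kψ * D) := by ring
  have hA4 : (ν Uᶜ).toReal * ((Kψ : ℝ) * D) ≤ (m / r) * (Kψ * D) :=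
    mul_le_mul_of_nonneg_right hUc_le hKD0
  have hcenter : ∑ i ∈ range q, a i * ψ (x i) + (ν Uᶜ).toReal * ψ (x 0) ≤
      (q : ℝ)⁻¹ * (∑ i ∈ range q, ψ (x i)) + q * (3 * q * (m / r) * (Kψ * D)) := by
    have h4 : (∑ i ∈ range q, a i) * ψ (x 0) + (ν Uᶜ).toReal * ψ (x 0) = ψ (x 0) := by
      rw [← add_mul, hUc2, one_mul]
    linarith [hkeysum]
  have hring : (q : ℝ) * (3 * q * (m / r) * (Kψ * D)) + Kψ * m + (m / r) * (Kψ * D)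
      = (1 + D / r + 3 * q ^ 2 * D / r) * Kψ * m := by
    field_simp
    ring
  linarith


end Aux

/-- locking: if the Lipschitz function `φ` is maximized by the
periodic orbit `O`, then for every `ε > 0` there is `δ > 0` such that for all
Lipschitz `ψ` with `lip(ψ) ≤ δ`, the function `φ - ε·dist(·,O) + ψ` is uniquely
maximized by `O`. -/
theorem stmt5 {X : Type*} [MetricSpace X] [CompactSpace X]
    [MeasurableSpace X] [BorelSpace X]
    (T : X → X) (hT : Continuous T)
    (φ : X → ℝ) (Kφ : NNReal) (hφ : LipschitzWith Kφ φ)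
    (y₀ : X) (p : ℕ) (hp : 0 < p) (hper : T^[p] y₀ = y₀)
    (O : Set X) (hO : O = (fun k => T^[k] y₀) '' Set.Iio p)
    (hmax : ∫ x, φ x ∂(orbMeas T y₀ p) = beta T φ) :
    ∀ ε : ℝ, 0 < ε → ∃ δ : ℝ, 0 < δ ∧
      ∀ (ψ : X → ℝ) (Kψ : NNReal), LipschitzWith Kψ ψ → (Kψ : ℝ) ≤ δ →
        ∀ ν : Measure X, IsProbabilityMeasure ν → ν.map T = ν →
          ν ≠ orbMeas T y₀ p →
          ∫ x, (φ x - ε * infDist x O + ψ x) ∂ν <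
            ∫ x, (φ x - ε * infDist x O + ψ x) ∂(orbMeas T y₀ p) := by
  classical
  intro ε hε
  set q := Function.minimalPeriod T y₀ with hq
  have hyp : Function.IsPeriodicPt T p y₀ := hper
  have hq0 : 0 < q := hyp.minimalPeriod_pos hp
  have hqle : q ≤ p := Nat.le_of_dvd hp hyp.minimalPeriod_dvd
  set x : ℕ → X := fun i => T^[i] y₀ with hx
  have hinj : Set.InjOn x (Set.Iio q) := Function.iterate_injOn_Iio_minimalPeriod
  have hxsucc : ∀ i, T (x i) = x ((i + 1) % q) := by
    intro i
    have h1 : T (x i) = x (i + 1) := (Function.iterate_succ_apply' T i y₀).symm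
    have h2 : x ((i + 1) % q) = x (i + 1) := Function.iterate_mod_minimalPeriod_eq
    rw [h1, h2]
  have hOq : O = x '' Set.Iio q := by
    rw [hO]
    apply Set.Subset.antisymm
    · rintro _ ⟨k, hk, rfl⟩
      exact ⟨k % q, Nat.mod_lt _ hq0, Function.iterate_mod_minimalPeriod_eq⟩
    · rintro _ ⟨i, hi, rfl⟩
      exact ⟨i, lt_of_lt_of_le hi hqle, rfl⟩
  -- separation constant
  obtain ⟨s, hs0, hsep⟩ : ∃ s : ℝ, 0 < s ∧ ∀ i < q, ∀ j < q, i ≠ j → s ≤ dist (x i) (x j) := by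
    rcases Nat.lt_or_ge q 2 with hq1 | hq2
    · exact ⟨1, one_pos, fun i hi j hj hij => absurd (by omega : i = j) hij⟩
    · set F := (Finset.range q ×ˢ Finset.range q).filter (fun ij => ij.1 ≠ ij.2) with hF
      have hFne : F.Nonempty := ⟨(0, 1), by
        simp only [hF, Finset.mem_filter, Finset.mem_product, Finset.mem_range]
        omega⟩
      refine ⟨F.inf' hFne (fun ij => dist (x ij.1) (x ij.2)), ?_, ?_⟩
      · rw [Finset.lt_inf'_iff]
        rintro ⟨i, j⟩ hij
        simp only [hF, Finset.mem_filter, Finset.mem_product, Finset.mem_range] at hij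
        exact dist_pos.2 fun h => hij.2 (hinj hij.1.1 hij.1.2 h)
      · intro i hi j hj hij
        refine Finset.inf'_le (fun ij => dist (x ij.1) (x ij.2))
          (show (i, j) ∈ F from ?_)
        simp only [hF, Finset.mem_filter, Finset.mem_product, Finset.mem_range]
        exact ⟨⟨hi, hj⟩, hij⟩
  -- diameter bound
  obtain ⟨D, hD⟩ : ∃ D : ℝ, ∀ a b : X, dist a b ≤ D := by
    obtain ⟨D, hD⟩ := Metric.isBounded_iff.1 (isCompact_univ (X := X)).isBounded
    exact ⟨D, fun a b => hD (Set.mem_univ a) (Set.mem_univ b)⟩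
  have hD0 : 0 ≤ D := le_trans dist_nonneg (hD y₀ y₀)
  -- radius
  have hcont : ∀ i : ℕ, ∃ d > 0, ∀ z, dist z (x i) < d → dist (T z) (T (x i)) < s / 3 :=
    fun i => Metric.continuous_iff.1 hT (x i) (s / 3) (by linarith)
  choose d hd0 hd using hcont
  have hFne : (Finset.range q).Nonempty := ⟨0, Finset.mem_range.2 hq0⟩
  set r := min (s / 3) ((Finset.range q).inf' hFne d) with hr
  have hr0 : 0 < r := lt_min (by linarith) ((Finset.lt_inf'_iff hFne).2 fun i _ => hd0 i)
  have hrs : r ≤ s / 3 := min_le_left _ _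
  have hmap : ∀ i < q, ∀ z, dist z (x i) < r → dist (T z) (x ((i + 1) % q)) < s / 3 := by
    intro i hi z hz
    have h1 : r ≤ d i := (min_le_right _ _).trans (Finset.inf'_le _ (Finset.mem_range.2 hi))
    have h2 := hd i z (lt_of_lt_of_le hz h1)
    rwa [hxsucc i] at h2
  -- the constant
  set C := 1 + D / r + 3 * (q : ℝ) ^ 2 * D / r with hC
  have hC1 : 1 ≤ C := by
    have h1 : 0 ≤ D / r := div_nonneg hD0 hr0.le
    have h2 : 0 ≤ 3 * (q : ℝ) ^ 2 * D / r := by positivity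
    rw [hC]; linarith
  have hC0 : 0 < C := by linarith
  refine ⟨ε / (2 * C), div_pos hε (by linarith), ?_⟩
  intro ψ Kψ hψ hKδ ν hνp hνinv hνne
  haveI := hνp
  haveI : IsProbabilityMeasure (orbMeas T y₀ p) := orbMeas_prob T y₀ p hp
  have hμmin : orbMeas T y₀ p = orbMeas T y₀ q := orbMeas_min T y₀ p hp hper
  have hφc : Continuous φ := hφ.continuous
  have hψc : Continuous ψ := hψ.continuous
  have hdc : Continuous fun z => infDist z O := continuous_infDist_pt O
  set m := ∫ z, infDist z O ∂ν with hm
  have hm0 : 0 ≤ m := integral_nonneg fun z => infDist_nonneg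
  have hmpos : 0 < m := by
    rcases hm0.lt_or_eq with h | h
    · exact h
    · exact absurd ((eq_orb T hT y₀ hq0 O hOq ν hνp hνinv h.symm).trans hμmin.symm) hνne
  have hshadow := shadow T hT x q hq0 O hOq s r D hs0 hsep hr0 hrs hmap hD ν hνp hνinv ψ Kψ hψ
  rw [← hm, ← hC] at hshadow
  have hμψ : ∫ z, ψ z ∂(orbMeas T y₀ p) = (q : ℝ)⁻¹ * ∑ i ∈ Finset.range q, ψ (x i) := by
    rw [hμmin]; exact integral_orbMeas T y₀ q hψc
  have hμd : ∫ z, infDist z O ∂(orbMeas T y₀ p) = 0 := by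
    rw [hμmin, integral_orbMeas T y₀ q hdc]
    have h1 : ∀ i ∈ Finset.range q, infDist (T^[i] y₀) O = 0 := fun i hi =>
      infDist_zero_of_mem (by rw [hOq]; exact ⟨i, Finset.mem_range.1 hi, rfl⟩)
    rw [Finset.sum_congr rfl h1]
    simp
  have hβ : ∫ z, φ z ∂ν ≤ ∫ z, φ z ∂(orbMeas T y₀ p) := by
    rw [hmax]
    apply le_csSup
    · obtain ⟨w, _, hw⟩ := isCompact_univ.exists_isMaxOn ⟨y₀, Set.mem_univ y₀⟩
        hφc.continuousOn
      refine ⟨φ w, ?_⟩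
      rintro _ ⟨κ, ⟨hκp, _⟩, rfl⟩
      haveI := hκp
      calc ∫ z, φ z ∂κ ≤ ∫ z, φ w ∂κ :=
            integral_mono (cont_integrable hφc κ) (integrable_const _)
              (fun z => hw (Set.mem_univ z))
        _ = φ w := by simp
    · exact ⟨ν, ⟨hνp, hνinv⟩, rfl⟩
  have hsplit : ∀ κ : Measure X, IsProbabilityMeasure κ →
      ∫ z, (φ z - ε * infDist z O + ψ z) ∂κ
        = ∫ z, φ z ∂κ - ε * ∫ z, infDist z O ∂κ + ∫ z, ψ z ∂κ := by
    intro κ hκ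
    haveI := hκ
    have e1 : ∫ z, (φ z - ε * infDist z O + ψ z) ∂κ
        = ∫ z, (φ z - ε * infDist z O) ∂κ + ∫ z, ψ z ∂κ :=
      integral_add ((cont_integrable hφc κ).sub ((cont_integrable hdc κ).const_mul ε))
        (cont_integrable hψc κ)
    have e2 : ∫ z, (φ z - ε * infDist z O) ∂κ
        = ∫ z, φ z ∂κ - ∫ z, ε * infDist z O ∂κ :=
      integral_sub (cont_integrable hφc κ) ((cont_integrable hdc κ).const_mul ε)
    have e3 : ∫ z, ε * infDist z O ∂κ = ε * ∫ z, infDist z O ∂κ := integral_const_mul ε _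
    rw [e1, e2, e3]
  rw [hsplit ν hνp, hsplit _ this, hμd, hμψ, ← hm]
  have hKnn : (0 : ℝ) ≤ (Kψ : ℝ) := Kψ.coe_nonneg
  have hCK : C * (Kψ : ℝ) * m ≤ (ε / 2) * m := by
    have h1 : C * (Kψ : ℝ) ≤ C * (ε / (2 * C)) := mul_le_mul_of_nonneg_left hKδ hC0.le
    have h2 : C * (ε / (2 * C)) = ε / 2 := by field_simp
    rw [h2] at h1
    exact mul_le_mul_of_nonneg_right h1 hm0
  linarith [mul_pos hε hmpos]
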